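/- (Gohberg–Sementsul–Trench formula) Let $A$ be an invertible $n\times n$ Toeplitz matrix, let $x=(x_1,\ldots,x_n)^\top$ be the first column and $y=(y_1,\ldots,y_n)^\top$ the last column of $A^{-1}$, and suppose $x_1\neq 0$. Then $A^{-1}=\frac{1}{x_1}\big(L(x)U(y)-L'(y)U'(x)\big)$, where $L(x)$ is the lower triangular Toeplitz matrix with first column $x$, $U(y)$ is the upper triangular Toeplitz matrix with first row $(y_n,\ldots,y_1)$, $L'(y)$ is the lower triangular Toeplitz matrix with first column $(0,y_1,\ldots,y_{n-1})^\top$, and $U'(x)$ is the upper triangular Toeplitz matrix with first row $(0,x_n,\ldots,x_2)$. -/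

import Mathlib

theorem stmt_15 (n : ℕ) (hn : 1 ≤ n)
    (A : Matrix (Fin n) (Fin n) ℂ)
    (hToep : ∀ i j i' j' : Fin n, (i : ℤ) - (j : ℤ) = (i' : ℤ) - (j' : ℤ) → A i j = A i' j')
    (hA : IsUnit A.det)
    (x y : ℕ → ℂ)
    (hx : ∀ i : Fin n, x (i : ℕ) = A⁻¹ i ⟨0, by omega⟩)
    (hy : ∀ i : Fin n, y (i : ℕ) = A⁻¹ i ⟨n - 1, by omega⟩)
    (hx0 : x 0 ≠ 0) :
    A⁻¹ = (x 0)⁻¹ •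
      ((Matrix.of fun i j : Fin n => if (j : ℕ) ≤ (i : ℕ) then x ((i : ℕ) - (j : ℕ)) else 0) *
       (Matrix.of fun i j : Fin n =>
          if (i : ℕ) ≤ (j : ℕ) then y (n - 1 - ((j : ℕ) - (i : ℕ))) else 0) -
       (Matrix.of fun i j : Fin n =>
          if (j : ℕ) < (i : ℕ) then y ((i : ℕ) - (j : ℕ) - 1) else 0) *
       (Matrix.of fun i j : Fin n =>
          if (i : ℕ) < (j : ℕ) then x (n - ((j : ℕ) - (i : ℕ))) else 0)) := by
  obtain ⟨m, rfl⟩ : ∃ m, n = m + 1 := ⟨n - 1, by omega⟩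
  set G := A⁻¹ with hGdef
  have hAG : A * G = 1 := Matrix.mul_nonsing_inv A hA
  have hGA : G * A = 1 := Matrix.nonsing_inv_mul A hA
  have hx' : ∀ i : Fin (m+1), G i 0 = x i := fun i => (hx i).symm
  have hy' : ∀ i : Fin (m+1), G i (Fin.last m) = y i := fun i => (hy i).symm
  -- persymmetry
  have hpersym : ∀ i j : Fin (m+1), G i j = G (Fin.rev j) (Fin.rev i) := by
    have hsub : A.submatrix Fin.rev Fin.rev = A.transpose := by
      ext i j
      exact hToep _ _ _ _ (by simp only [Fin.val_rev]; omega)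
    have h1 : G.submatrix Fin.rev Fin.rev * A.transpose = 1 := by
      rw [← hsub]
      ext i j
      rw [Matrix.mul_apply]
      calc ∑ k, G.submatrix Fin.rev Fin.rev i k * A.submatrix Fin.rev Fin.rev k j
          = ∑ k, G (Fin.rev i) k * A k (Fin.rev j) := by
            exact Fintype.sum_bijective Fin.rev Fin.rev_bijective _ _ (fun k => by
              simp [Matrix.submatrix_apply, Fin.rev_rev])
        _ = (G * A) (Fin.rev i) (Fin.rev j) := (Matrix.mul_apply).symm
        _ = (1 : Matrix (Fin (m+1)) (Fin (m+1)) ℂ) i j := by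
            rw [hGA, Matrix.one_apply, Matrix.one_apply]
            simp [Fin.rev_inj]
    have h2 : G.transpose = G.submatrix Fin.rev Fin.rev := by
      rw [hGdef, Matrix.transpose_nonsing_inv, Matrix.inv_eq_left_inv h1, hGdef]
    intro i j
    have h3 := congrFun (congrFun h2 (Fin.rev i)) (Fin.rev j)
    simpa [Matrix.transpose_apply, Fin.rev_rev] using h3.symm
  have hAGapp : ∀ i j : Fin (m+1), ∑ k, A i k * G k j = if i = j then (1:ℂ) else 0 := by
    intro i j
    rw [← Matrix.mul_apply, hAG, Matrix.one_apply]
  have hT : ∀ (i k : Fin m), A i.succ k.succ = A i.castSucc k.castSucc := fun i k =>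
    hToep _ _ _ _ (by simp only [Fin.val_succ, Fin.coe_castSucc]; omega)
  have hGlast : ∀ j : Fin (m+1), G (Fin.last m) j = x (m - (j:ℕ)) := by
    intro j
    rw [hpersym, Fin.rev_last, hx']
    exact congrArg x (by simp only [Fin.val_rev]; omega)
  have hG0 : ∀ j : Fin (m+1), G 0 j = y (m - (j:ℕ)) := by
    intro j
    rw [hpersym, Fin.rev_zero, hy']
    exact congrArg y (by simp only [Fin.val_rev]; omega)
  have hyx : y m = x 0 := by
    have h := hGlast (Fin.last m)
    rw [hy'] at h
    simpa using h
  -- the vectors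
  set v : Fin (m+1) → ℂ := fun i =>
    Fin.cases 0 (fun k => A k.castSucc (Fin.last m)) i with hvdef
  set sy : Fin (m+1) → ℂ := fun i => if (i:ℕ) = 0 then 0 else y ((i:ℕ) - 1) with hsydef
  set W : ℂ := ∑ k : Fin m, A 0 k.succ * y k with hWdef
  have hv0 : v 0 = 0 := by simp [hvdef]
  have hvs : ∀ k : Fin m, v k.succ = A k.castSucc (Fin.last m) := by
    intro k; simp [hvdef]
  have hsy0 : sy 0 = 0 := by simp [hsydef]
  have hsys : ∀ k : Fin m, sy k.succ = y k := by
    intro k; simp [hsydef]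
  have hxv : ∀ i : Fin (m+1), ∑ k, A i k * x (k:ℕ) = if i = 0 then (1:ℂ) else 0 := by
    intro i
    calc ∑ k, A i k * x (k:ℕ) = ∑ k, A i k * G k 0 := by
          refine Finset.sum_congr rfl fun k _ => by rw [hx']
      _ = _ := hAGapp i 0
  have hCast : ∀ (l : Fin m) (j : Fin (m+1)),
      ∑ k : Fin m, A l.castSucc k.castSucc * G k.castSucc j
        = (if l.castSucc = j then (1:ℂ) else 0) - A l.castSucc (Fin.last m) * G (Fin.last m) j := by
    intro l j
    have h2 := hAGapp l.castSucc j
    rw [Fin.sum_univ_castSucc] at h2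
    linear_combination h2
  have hGAapp : ∀ (p : Fin (m+1)) (α : Fin (m+1) → ℂ),
      ∑ k, G p k * (∑ l, A k l * α l) = α p := by
    intro p α
    have h : G.mulVec (A.mulVec α) = α := by
      rw [Matrix.mulVec_mulVec, hGA, Matrix.one_mulVec]
    have h2 := congrFun h p
    simpa [Matrix.mulVec, dotProduct] using h2
  have hAsy : ∀ i : Fin (m+1), ∑ k, A i k * sy k = (if i = 0 then W else 0) - v i * x 0 := by
    intro i
    rw [Fin.sum_univ_succ]
    induction i using Fin.cases with
    | zero =>
        simp only [hsy0, hsys, mul_zero, zero_add, hv0, if_pos rfl, zero_mul, sub_zero]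
        exact hWdef.symm
    | succ l =>
        rw [hsy0, if_neg (Fin.succ_ne_zero l), hvs]
        have h3 : ∑ k : Fin m, A l.succ k.succ * sy k.succ
            = ∑ k : Fin m, A l.castSucc k.castSucc * G k.castSucc (Fin.last m) := by
          refine Finset.sum_congr rfl fun k _ => ?_
          rw [hsys, hT, hy']
          rfl
        rw [h3, hCast]
        rw [if_neg (Fin.ne_last_of_lt (Fin.castSucc_lt_last l)), hGlast (Fin.last m)]
        simp only [Fin.val_last, Nat.sub_self]
        ring
  have hGv : ∀ p : Fin (m+1), x 0 * (∑ k, G p k * v k) = W * x (p:ℕ) - sy p := by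
    intro p
    have h := hGAapp p (fun l => W * x (l:ℕ) - sy l)
    have hinner : ∀ k : Fin (m+1), (∑ l, A k l * (W * x (l:ℕ) - sy l)) = v k * x 0 := by
      intro k
      have e1 : (∑ l, A k l * (W * x (l:ℕ) - sy l))
          = W * (∑ l, A k l * x (l:ℕ)) - ∑ l, A k l * sy l := by
        rw [Finset.mul_sum, ← Finset.sum_sub_distrib]
        exact Finset.sum_congr rfl fun l _ => by ring
      rw [e1, hxv, hAsy]
      split_ifs <;> ring
    rw [Finset.sum_congr rfl (fun k _ => by rw [hinner k])] at h
    rw [← h, Finset.mul_sum]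
    exact Finset.sum_congr rfl fun k _ => by ring
  -- main recursion
  have hrec : ∀ i' j' : Fin m, x 0 * G i'.succ j'.succ
      = x 0 * G i'.castSucc j'.castSucc + x ((i':ℕ)+1) * y (m - 1 - (j':ℕ))
        - y (i':ℕ) * x (m - (j':ℕ)) := by
    intro i' j'
    set Pj : Fin (m+1) := Fin.rev j'.castSucc with hPjdef
    have hPjv : (Pj : ℕ) = m - (j':ℕ) := by
      simp only [hPjdef, Fin.val_rev, Fin.coe_castSucc]; omega
    have hω : ∑ k : Fin m, A 0 k.succ * G k.castSucc j'.castSucc = ∑ k, G Pj k * v k := by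
      have e1 : ∀ k : Fin m, A 0 (Fin.rev k).succ * G (Fin.rev k).castSucc j'.castSucc
          = G Pj k.succ * v k.succ := by
        intro k
        have hA1 : A 0 (Fin.rev k).succ = A k.castSucc (Fin.last m) :=
          hToep _ _ _ _ (by
            simp only [Fin.val_succ, Fin.val_rev, Fin.coe_castSucc, Fin.val_last, Fin.val_zero]
            omega)
        have hG1 : G (Fin.rev k).castSucc j'.castSucc = G Pj k.succ := by
          rw [hpersym]
          congr 1
          ext
          simp only [Fin.val_rev, Fin.coe_castSucc, Fin.val_succ]
          omega
        rw [hA1, hG1, hvs]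
        ring
      calc ∑ k : Fin m, A 0 k.succ * G k.castSucc j'.castSucc
          = ∑ k : Fin m, A 0 (Fin.rev k).succ * G (Fin.rev k).castSucc j'.castSucc :=
            Fintype.sum_bijective Fin.rev Fin.rev_bijective _ _ (fun k => by
              rw [Fin.rev_rev])
        _ = ∑ k : Fin m, G Pj k.succ * v k.succ := Finset.sum_congr rfl fun k _ => e1 k
        _ = ∑ k, G Pj k * v k := by
            rw [Fin.sum_univ_succ (f := fun k => G Pj k * v k), hv0]
            ring
    set u : Fin (m+1) → ℂ := fun k =>
      Fin.cases (G 0 j'.succ) (fun k' => G k'.succ j'.succ - G k'.castSucc j'.castSucc) k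
      with hudef
    have hu0 : u 0 = G 0 j'.succ := by simp [hudef]
    have hus : ∀ k : Fin m, u k.succ = G k.succ j'.succ - G k.castSucc j'.castSucc := by
      intro k; simp [hudef]
    have hAu : ∀ i : Fin (m+1), ∑ k, A i k * u k
        = v i * x (m - (j':ℕ)) - (if i = 0 then (∑ k, G Pj k * v k) else 0) := by
      intro i
      have hsplit : ∑ k, A i k * u k
          = (∑ k, A i k * G k j'.succ) - ∑ k : Fin m, A i k.succ * G k.castSucc j'.castSucc := by
        rw [Fin.sum_univ_succ, Fin.sum_univ_succ (f := fun k => A i k * G k j'.succ), hu0,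
          Finset.sum_congr rfl (fun (k : Fin m) _ => by rw [hus k, mul_sub]),
          Finset.sum_sub_distrib]
        ring
      rw [hsplit, hAGapp, ← hω]
      induction i using Fin.cases with
      | zero =>
          rw [if_pos rfl, if_neg (Fin.succ_ne_zero j').symm, hv0]
          ring
      | succ l =>
          rw [if_neg (Fin.succ_ne_zero l), hvs]
          have h4 : ∑ k : Fin m, A l.succ k.succ * G k.castSucc j'.castSucc
              = (if l.castSucc = j'.castSucc then (1:ℂ) else 0)
                - A l.castSucc (Fin.last m) * x (m - (j':ℕ)) := by
            rw [Finset.sum_congr rfl (fun k _ => by rw [hT]), hCast, hGlast]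
            rfl
          rw [h4]
          have h5 : (if l.succ = j'.succ then (1:ℂ) else 0)
              = (if l.castSucc = j'.castSucc then (1:ℂ) else 0) := by
            simp [Fin.succ_inj, Fin.castSucc_inj]
          rw [h5]
          ring
    have hup : x 0 * u i'.succ
        = y (m - 1 - (j':ℕ)) * x ((i':ℕ)+1) - x (m - (j':ℕ)) * sy i'.succ := by
      have h := hGAapp i'.succ u
      rw [Finset.sum_congr rfl (fun k _ => by rw [hAu k])] at h
      have e2 : ∑ k, G i'.succ k * (v k * x (m - (j':ℕ))
            - (if k = 0 then (∑ k2, G Pj k2 * v k2) else 0))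
          = x (m - (j':ℕ)) * (∑ k, G i'.succ k * v k)
            - G i'.succ 0 * (∑ k2, G Pj k2 * v k2) := by
        have e3 : G i'.succ 0 * (∑ k2, G Pj k2 * v k2)
            = ∑ k, (if k = 0 then (G i'.succ k * (∑ k2, G Pj k2 * v k2)) else 0) := by
          rw [Finset.sum_ite_eq' Finset.univ (0 : Fin (m+1))
            (fun k => G i'.succ k * (∑ k2, G Pj k2 * v k2))]
          simp
        rw [e3, Finset.mul_sum, ← Finset.sum_sub_distrib]
        refine Finset.sum_congr rfl fun k _ => ?_
        split_ifs <;> ring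
      rw [e2] at h
      -- h : x(m-j') * (∑ G i'.succ k v k) - G i'.succ 0 * ω = u i'.succ
      have h6 := hGv i'.succ
      have h7 := hGv Pj
      rw [hPjv] at h7
      have hj'm : (j':ℕ) < m := j'.isLt
      have h8 : sy Pj = y (m - 1 - (j':ℕ)) := by
        rw [hsydef]
        simp only
        rw [if_neg (by omega : ¬ (Pj:ℕ) = 0)]
        exact congrArg y (by omega)
      rw [hx' i'.succ] at h
      rw [Fin.val_succ] at h h6
      rw [h8] at h7
      linear_combination (-(x 0)) * h + x (m - (j':ℕ)) * h6 - x ((i':ℕ)+1) * h7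
    rw [hus i', hsys i'] at hup
    linear_combination hup
  -- final assembly
  rw [eq_comm, inv_smul_eq_iff₀ hx0]
  set P : Matrix (Fin (m+1)) (Fin (m+1)) ℂ :=
    Matrix.of fun i j : Fin (m+1) => if (j:ℕ) ≤ (i:ℕ) then x ((i:ℕ) - (j:ℕ)) else 0 with hP
  set Q : Matrix (Fin (m+1)) (Fin (m+1)) ℂ :=
    Matrix.of fun i j : Fin (m+1) =>
      if (i:ℕ) ≤ (j:ℕ) then y (m + 1 - 1 - ((j:ℕ) - (i:ℕ))) else 0 with hQ
  set R : Matrix (Fin (m+1)) (Fin (m+1)) ℂ :=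
    Matrix.of fun i j : Fin (m+1) => if (j:ℕ) < (i:ℕ) then y ((i:ℕ) - (j:ℕ) - 1) else 0 with hR
  set S : Matrix (Fin (m+1)) (Fin (m+1)) ℂ :=
    Matrix.of fun i j : Fin (m+1) =>
      if (i:ℕ) < (j:ℕ) then x (m + 1 - ((j:ℕ) - (i:ℕ))) else 0 with hS
  ext i j
  rw [Matrix.sub_apply, Matrix.smul_apply, smul_eq_mul]
  induction i using Fin.induction generalizing j with
  | zero =>
      have e1 : (P * Q) 0 j = x 0 * y (m - (j:ℕ)) := by
        rw [Matrix.mul_apply, Fin.sum_univ_succ]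
        have h0 : P 0 0 * Q 0 j = x 0 * y (m - (j:ℕ)) := by
          simp only [hP, hQ, Matrix.of_apply, Fin.val_zero]
          erw [if_pos (Nat.le_refl 0), if_pos (Nat.zero_le _)]
          exact congrArg₂ (fun a b => x a * y b) (by omega) (by omega)
        have hz : ∀ k : Fin m, P 0 k.succ * Q k.succ j = 0 := by
          intro k
          simp only [hP, Matrix.of_apply, Fin.val_zero, Fin.val_succ]
          erw [if_neg (by omega)]
          ring
        rw [h0, Finset.sum_congr rfl (fun k _ => hz k), Finset.sum_const_zero, add_zero]
      have e2 : (R * S) 0 j = 0 := by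
        rw [Matrix.mul_apply]
        refine Finset.sum_eq_zero fun k _ => ?_
        simp only [hR, Matrix.of_apply, Fin.val_zero]
        erw [if_neg (by omega)]
        ring
      rw [e1, e2, hG0, sub_zero]
  | succ i' ih =>
      induction j using Fin.cases with
      | zero =>
          have e1 : (P * Q) i'.succ 0 = x ((i':ℕ)+1) * y m := by
            rw [Matrix.mul_apply, Fin.sum_univ_succ]
            have h0 : P i'.succ 0 * Q 0 0 = x ((i':ℕ)+1) * y m := by
              simp only [hP, hQ, Matrix.of_apply, Fin.val_zero, Fin.val_succ]
              erw [if_pos (Nat.zero_le _), if_pos (Nat.le_refl 0)]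
              exact congrArg₂ (fun a b => x a * y b) (by omega) (by omega)
            have hz : ∀ k : Fin m, P i'.succ k.succ * Q k.succ 0 = 0 := by
              intro k
              simp only [hQ, Matrix.of_apply, Fin.val_zero, Fin.val_succ]
              erw [if_neg (by omega)]
              ring
            rw [h0, Finset.sum_congr rfl (fun k _ => hz k), Finset.sum_const_zero, add_zero]
          have e2 : (R * S) i'.succ 0 = 0 := by
            rw [Matrix.mul_apply]
            refine Finset.sum_eq_zero fun k _ => ?_
            simp only [hS, Matrix.of_apply, Fin.val_zero]
            erw [if_neg (by omega)]
            ring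
          rw [e1, e2, hx' i'.succ, Fin.val_succ, hyx, sub_zero]
          ring
      | succ j' =>
          have keyPQ : ∀ k : Fin m, P i'.succ k.succ * Q k.succ j'.succ
              = P i'.castSucc k.castSucc * Q k.castSucc j'.castSucc := by
            intro k
            simp only [hP, hQ, Matrix.of_apply, Fin.val_succ, Fin.coe_castSucc,
              Nat.add_le_add_iff_right, Nat.add_sub_add_right]
          have keyRS : ∀ k : Fin m, R i'.succ k.succ * S k.succ j'.succ
              = R i'.castSucc k.castSucc * S k.castSucc j'.castSucc := by
            intro k
            simp only [hR, hS, Matrix.of_apply, Fin.val_succ, Fin.coe_castSucc,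
              Nat.add_lt_add_iff_right, Nat.add_sub_add_right]
          have e1 : (P * Q) i'.succ j'.succ
              = x ((i':ℕ)+1) * y (m - 1 - (j':ℕ)) + (P * Q) i'.castSucc j'.castSucc := by
            have h0 : P i'.succ 0 * Q 0 j'.succ = x ((i':ℕ)+1) * y (m - 1 - (j':ℕ)) := by
              simp only [hP, hQ, Matrix.of_apply, Fin.val_zero, Fin.val_succ]
              erw [if_pos (Nat.zero_le _), if_pos (Nat.zero_le _)]
              exact congrArg₂ (fun a b => x a * y b) (by omega) (by omega)
            have hlast : P i'.castSucc (Fin.last m) * Q (Fin.last m) j'.castSucc = 0 := by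
              simp only [hP, Matrix.of_apply, Fin.coe_castSucc, Fin.val_last]
              rw [if_neg (by omega)]
              ring
            rw [Matrix.mul_apply (M := P) (N := Q) (i := i'.succ),
              Fin.sum_univ_succ, h0,
              Matrix.mul_apply (M := P) (N := Q) (i := i'.castSucc),
              Fin.sum_univ_castSucc, hlast, add_zero,
              Finset.sum_congr rfl (fun (k : Fin m) _ => keyPQ k)]
          have e2 : (R * S) i'.succ j'.succ
              = y (i':ℕ) * x (m - (j':ℕ)) + (R * S) i'.castSucc j'.castSucc := by
            have h0 : R i'.succ 0 * S 0 j'.succ = y (i':ℕ) * x (m - (j':ℕ)) := by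
              simp only [hR, hS, Matrix.of_apply, Fin.val_zero, Fin.val_succ]
              erw [if_pos (by omega), if_pos (by omega)]
              exact congrArg₂ (fun a b => y a * x b) (by omega) (by omega)
            have hlast : R i'.castSucc (Fin.last m) * S (Fin.last m) j'.castSucc = 0 := by
              simp only [hR, Matrix.of_apply, Fin.coe_castSucc, Fin.val_last]
              rw [if_neg (by omega)]
              ring
            rw [Matrix.mul_apply (M := R) (N := S) (i := i'.succ),
              Fin.sum_univ_succ, h0,
              Matrix.mul_apply (M := R) (N := S) (i := i'.castSucc),
              Fin.sum_univ_castSucc, hlast, add_zero,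
              Finset.sum_congr rfl (fun (k : Fin m) _ => keyRS k)]
          rw [e1, e2]
          have h10 := ih j'.castSucc
          have h11 := hrec i' j'
          linear_combination h10 - h11
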